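/- arXiv:2301.04318 — 2 statements merged into one kernel-verified Lean document; each statement's English description precedes it below -/
import Mathlib

section
/- (Core of Theorem 2, APPNP.) Let Â be an N×N real symmetric positive definite matrix, let 0 < α < 1, and let M and H⁰ be N×d real matrices (M playing the role of H^{(l−1)}Θ^{(l)}). Then the function J(H) = −Tr(Hᵀ M) + (1/(2(1−α)))·Tr(Hᵀ Â⁻¹ (H − 2α H⁰)) over N×d real matrices H attains its global minimum at the unique point H* = (1−α)·Â·M + α·H⁰. -/
open Matrix

theorem aux_quad_nonneg {N d : ℕ} (B : Matrix (Fin N) (Fin N) ℝ) (hB : B.PosDef)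
    (D : Matrix (Fin N) (Fin d) ℝ) :
    0 ≤ (Dᵀ * B * D).trace ∧ ((Dᵀ * B * D).trace = 0 → D = 0) := by
  have hdiag : ∀ j, (Dᵀ * B * D) j j
      = (fun i => D i j) ⬝ᵥ B *ᵥ (fun i => D i j) := by
    intro j
    simp only [Matrix.mul_apply, dotProduct, Matrix.mulVec, Matrix.transpose_apply,
      Finset.sum_mul, Finset.mul_sum]
    rw [Finset.sum_comm]
    exact Finset.sum_congr rfl fun _ _ => Finset.sum_congr rfl fun _ _ => by ring
  have htr : (Dᵀ * B * D).trace = ∑ j, (fun i => D i j) ⬝ᵥ B *ᵥ (fun i => D i j) := by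
    simp [Matrix.trace, Matrix.diag, hdiag]
  have hterm : ∀ j, 0 ≤ (fun i => D i j) ⬝ᵥ B *ᵥ (fun i => D i j) := by
    intro j
    have := hB.posSemidef.dotProduct_mulVec_nonneg (fun i => D i j)
    simpa using this
  constructor
  · rw [htr]; exact Finset.sum_nonneg fun j _ => hterm j
  · intro h0
    rw [htr] at h0
    have hz : ∀ j ∈ Finset.univ, (fun i => D i j) ⬝ᵥ B *ᵥ (fun i => D i j) = 0 :=
      (Finset.sum_eq_zero_iff_of_nonneg (fun j _ => hterm j)).mp h0
    ext i j
    by_contra hne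
    have hcol : (fun i => D i j) ≠ 0 := by
      intro hc
      exact hne (by simpa using congrFun hc i)
    have := hB.dotProduct_mulVec_pos hcol
    rw [show star (fun i => D i j) = (fun i => D i j) from star_trivial _] at this
    exact absurd (hz j (Finset.mem_univ j)) (ne_of_gt this)

/-- Core of Theorem 2 (APPNP): for `Â` symmetric positive definite and `0 < α < 1`, the
function `J(H) = -Tr(Hᵀ M) + (1/(2(1-α))) Tr(Hᵀ Â⁻¹ (H - 2α H⁰))` attains its global
minimum at the unique point `H* = (1-α) Â M + α H⁰`. -/
theorem stmt_5 {N d : ℕ} (α : ℝ) (hα0 : 0 < α) (hα1 : α < 1)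
    (Ahat : Matrix (Fin N) (Fin N) ℝ) (hPD : Ahat.PosDef)
    (M H0 : Matrix (Fin N) (Fin d) ℝ) :
    let J : Matrix (Fin N) (Fin d) ℝ → ℝ :=
      fun H => -(Hᵀ * M).trace + (1 / (2 * (1 - α))) * (Hᵀ * Ahat⁻¹ * (H - (2 * α) • H0)).trace
    let Hstar : Matrix (Fin N) (Fin d) ℝ := (1 - α) • (Ahat * M) + α • H0
    ∀ H : Matrix (Fin N) (Fin d) ℝ,
      J Hstar ≤ J H ∧ (J Hstar = J H ↔ H = Hstar) := by
  intro J Hstar H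
  set B := Ahat⁻¹ with hBdef
  have hα : (1 : ℝ) - α ≠ 0 := by linarith
  have hc : (0:ℝ) < 1 / (2 * (1 - α)) := div_pos one_pos (by linarith)
  have hB : B.PosDef := hPD.inv
  have hBs : Bᵀ = B := by
    have := hB.isHermitian
    rwa [Matrix.IsHermitian, Matrix.conjTranspose_eq_transpose_of_trivial] at this
  have hdet : IsUnit Ahat.det := isUnit_iff_ne_zero.mpr (ne_of_gt hPD.det_pos)
  have hBA : B * Ahat = 1 := Matrix.nonsing_inv_mul Ahat hdet
  have hBH : B * Hstar = (1 - α) • M + α • (B * H0) := by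
    simp only [Hstar, Matrix.mul_add, Matrix.mul_smul, ← Matrix.mul_assoc, hBA,
      Matrix.one_mul]
  have key1 : ∀ X : Matrix (Fin N) (Fin d) ℝ,
      (Xᵀ * B * Hstar).trace = (1 - α) * (Xᵀ * M).trace + α * (Xᵀ * B * H0).trace := by
    intro X
    rw [Matrix.mul_assoc, hBH]
    simp [Matrix.mul_add, Matrix.mul_smul, Matrix.trace_add, Matrix.trace_smul,
      Matrix.mul_assoc, smul_eq_mul]
  have sym : ∀ X Y : Matrix (Fin N) (Fin d) ℝ,
      (Xᵀ * B * Y).trace = (Yᵀ * B * X).trace := by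
    intro X Y
    conv_lhs => rw [← Matrix.trace_transpose]
    simp [Matrix.transpose_mul, hBs, Matrix.mul_assoc]
  -- Key identity
  have hiden : J H - J Hstar
      = (1 / (2 * (1 - α))) * ((H - Hstar)ᵀ * B * (H - Hstar)).trace := by
    have hexp : ((H - Hstar)ᵀ * B * (H - Hstar)).trace
        = (Hᵀ * B * H).trace - 2 * (Hᵀ * B * Hstar).trace + (Hstarᵀ * B * Hstar).trace := by
      rw [Matrix.transpose_sub, Matrix.sub_mul, Matrix.sub_mul, Matrix.mul_sub,
        Matrix.mul_sub, Matrix.trace_sub, Matrix.trace_sub, Matrix.trace_sub,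
        sym Hstar H]
      ring
    have hJ : ∀ X : Matrix (Fin N) (Fin d) ℝ,
        J X = -(Xᵀ * M).trace + (1 / (2 * (1 - α)))
          * ((Xᵀ * B * X).trace - 2 * α * (Xᵀ * B * H0).trace) := by
      intro X
      simp only [J]
      rw [← hBdef, Matrix.mul_sub, Matrix.mul_smul, Matrix.trace_sub, Matrix.trace_smul,
        smul_eq_mul]
    rw [hexp, hJ H, hJ Hstar, key1 H, key1 Hstar]
    field_simp
    ring
  have hquad := aux_quad_nonneg B hB (H - Hstar)
  constructor
  · have hnn := mul_nonneg hc.le hquad.1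
    have h1 : 0 ≤ J H - J Hstar := by rw [hiden]; exact hnn
    linarith
  · constructor
    · intro heq
      have h0 : (1 / (2 * (1 - α))) * ((H - Hstar)ᵀ * B * (H - Hstar)).trace = 0 := by
        rw [← hiden, heq]; ring
      have := hquad.2 (by
        have := mul_eq_zero.mp h0
        rcases this with h | h
        · exact absurd h (ne_of_gt hc)
        · exact h)
      exact sub_eq_zero.mp this
    · intro h
      rw [h]
end

section
/- (Core of Theorem 3, JKNet.) Let Â be an N×N real symmetric positive definite matrix all of whose eigenvalues lie in (0, 1], let β > 0, set L̃ = I − Â, and let M be an N×d real matrix (playing the role of H^{(l−1)}Θ^{(l)}). Then the matrix P = Â⁻¹(I + β L̃) is symmetric positive definite, the matrix I − (β/(β+1))·Â is invertible, and the function J(H) = −Tr(Hᵀ M) + (1/2)·Tr(Hᵀ Â⁻¹(I + β L̃) H) over N×d real matrices H attains its global minimum at the unique point H* = (1/(β+1)) · (I − (β/(β+1))·Â)⁻¹ · Â · M. -/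
open Matrix

private lemma aux_smul_psd {n : ℕ} {M : Matrix (Fin n) (Fin n) ℝ} (h : M.PosSemidef)
    {c : ℝ} (hc : 0 ≤ c) : (c • M).PosSemidef := by
  refine posSemidef_iff_dotProduct_mulVec.mpr ⟨?_, fun x => ?_⟩
  · show (c • M)ᴴ = c • M
    rw [conjTranspose_smul, star_trivial, h.1.eq]
  · rw [smul_mulVec, dotProduct_smul]
    exact mul_nonneg hc (h.dotProduct_mulVec_nonneg x)

private lemma aux_smul_pd {n : ℕ} {M : Matrix (Fin n) (Fin n) ℝ} (h : M.PosDef)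
    {c : ℝ} (hc : 0 < c) : (c • M).PosDef := by
  refine posDef_iff_dotProduct_mulVec.mpr ⟨?_, fun x hx => ?_⟩
  · show (c • M)ᴴ = c • M
    rw [conjTranspose_smul, star_trivial, h.1.eq]
  · rw [smul_mulVec, dotProduct_smul]
    exact mul_pos hc (h.dotProduct_mulVec_pos hx)

private lemma aux_psd_of_spectrum {n : ℕ} {A : Matrix (Fin n) (Fin n) ℝ}
    (hA : A.IsHermitian) (h : ∀ ν ∈ spectrum ℝ A, 0 ≤ ν) : A.PosSemidef :=
  hA.posSemidef_iff_eigenvalues_nonneg.mpr fun i => h _ (hA.eigenvalues_mem_spectrum_real i)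

private lemma aux_diag {n d : ℕ} (P : Matrix (Fin n) (Fin n) ℝ)
    (K : Matrix (Fin n) (Fin d) ℝ) (j : Fin d) :
    (Kᵀ * P * K) j j = star (fun i => K i j) ⬝ᵥ (P *ᵥ fun i => K i j) := by
  simp only [Matrix.mul_apply, Matrix.transpose_apply, Matrix.mulVec, dotProduct,
    Pi.star_apply, star_trivial, Finset.sum_mul, Finset.mul_sum]
  rw [Finset.sum_comm]
  exact Finset.sum_congr rfl fun i _ => Finset.sum_congr rfl fun l _ => by ring

private lemma aux_trace_nonneg {n d : ℕ} {P : Matrix (Fin n) (Fin n) ℝ} (hP : P.PosSemidef)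
    (K : Matrix (Fin n) (Fin d) ℝ) : 0 ≤ (Kᵀ * P * K).trace := by
  rw [Matrix.trace]
  refine Finset.sum_nonneg fun j _ => ?_
  rw [Matrix.diag_apply, aux_diag]
  exact hP.dotProduct_mulVec_nonneg _

private lemma aux_trace_zero {n d : ℕ} {P : Matrix (Fin n) (Fin n) ℝ} (hP : P.PosDef)
    (K : Matrix (Fin n) (Fin d) ℝ) : (Kᵀ * P * K).trace = 0 ↔ K = 0 := by
  constructor
  · intro h
    have hz : ∀ j ∈ Finset.univ, (Kᵀ * P * K).diag j = 0 := by
      rw [Matrix.trace] at h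
      exact (Finset.sum_eq_zero_iff_of_nonneg fun j _ => by
        rw [Matrix.diag_apply, aux_diag]; exact hP.posSemidef.dotProduct_mulVec_nonneg _).mp h
    ext i j
    by_contra hij
    have hx : (fun i => K i j) ≠ 0 := by
      intro h0
      exact hij (congrFun h0 i)
    have := hP.dotProduct_mulVec_pos hx
    have h0 := hz j (Finset.mem_univ j)
    rw [Matrix.diag_apply, aux_diag] at h0
    rw [h0] at this
    exact lt_irrefl _ this
  · intro h
    simp [h]

/-- Core of Theorem 3 (JKNet): for `Â` symmetric positive definite with all eigenvalues in
`(0, 1]`, `β > 0` and `L̃ = I - Â`, the matrix `P = Â⁻¹(I + β L̃)` is symmetric positive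
definite, `I - (β/(β+1)) Â` is invertible, and `J(H) = -Tr(Hᵀ M) + (1/2) Tr(Hᵀ P H)`
attains its global minimum at the unique point
`H* = (1/(β+1)) (I - (β/(β+1)) Â)⁻¹ Â M`. -/
theorem stmt_6 {N d : ℕ} (β : ℝ) (hβ : 0 < β)
    (Ahat : Matrix (Fin N) (Fin N) ℝ) (hPD : Ahat.PosDef)
    (hspec : ∀ μ ∈ spectrum ℝ Ahat, μ ∈ Set.Ioc (0 : ℝ) 1)
    (M : Matrix (Fin N) (Fin d) ℝ) :
    let Ltil : Matrix (Fin N) (Fin N) ℝ := 1 - Ahat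
    let P : Matrix (Fin N) (Fin N) ℝ := Ahat⁻¹ * (1 + β • Ltil)
    let J : Matrix (Fin N) (Fin d) ℝ → ℝ :=
      fun H => -(Hᵀ * M).trace + (1 / 2) * (Hᵀ * P * H).trace
    let Hstar : Matrix (Fin N) (Fin d) ℝ :=
      (1 / (β + 1)) • (((1 : Matrix (Fin N) (Fin N) ℝ) - (β / (β + 1)) • Ahat)⁻¹ * Ahat * M)
    P.PosDef ∧
    IsUnit ((1 : Matrix (Fin N) (Fin N) ℝ) - (β / (β + 1)) • Ahat) ∧
    ∀ H : Matrix (Fin N) (Fin d) ℝ,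
      J Hstar ≤ J H ∧ (J Hstar = J H ↔ H = Hstar) := by
  intro Ltil P J Hstar
  have hβ1 : (0:ℝ) < β + 1 := by linarith
  have hAdet : IsUnit Ahat.det := hPD.det_pos.ne'.isUnit
  -- 1 - Ahat is PSD
  have h1A : ((1 : Matrix (Fin N) (Fin N) ℝ) - Ahat).PosSemidef := by
    refine aux_psd_of_spectrum (Matrix.isHermitian_one.sub hPD.1) fun ν hν => ?_
    rw [show (1 : Matrix (Fin N) (Fin N) ℝ) - Ahat
        = algebraMap ℝ (Matrix (Fin N) (Fin N) ℝ) 1 - Ahat by simp,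
      ← spectrum.singleton_sub_eq] at hν
    obtain ⟨a, ha, b, hb, hab⟩ := Set.mem_sub.mp hν
    rw [Set.mem_singleton_iff] at ha
    have := (hspec b hb).2
    linarith [hab, ha]
  -- Ahat⁻¹ - 1 is PSD
  have hinv1 : (Ahat⁻¹ - 1).PosSemidef := by
    refine aux_psd_of_spectrum (hPD.1.inv.sub Matrix.isHermitian_one) fun ν hν => ?_
    rw [show Ahat⁻¹ - (1 : Matrix (Fin N) (Fin N) ℝ)
        = Ahat⁻¹ - algebraMap ℝ (Matrix (Fin N) (Fin N) ℝ) 1 by simp,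
      ← spectrum.sub_singleton_eq] at hν
    obtain ⟨τ, hτ, s, hs, hab⟩ := Set.mem_sub.mp hν
    rw [Set.mem_singleton_iff] at hs
    have hτ0 : τ ≠ 0 := by
      intro h0
      exact (spectrum.zero_notMem_iff ℝ).mpr hPD.inv.isUnit (h0 ▸ hτ)
    set u : (Matrix (Fin N) (Fin N) ℝ)ˣ := hPD.isUnit.unit with hu
    have huv : (↑u : Matrix (Fin N) (Fin N) ℝ) = Ahat := hPD.isUnit.unit_spec
    have huinv : (↑u⁻¹ : Matrix (Fin N) (Fin N) ℝ) = Ahat⁻¹ := by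
      rw [Matrix.coe_units_inv, huv]
    have hmem : τ⁻¹ ∈ spectrum ℝ Ahat := by
      have := (spectrum.inv_mem_iff (r := Units.mk0 τ hτ0) (a := u⁻¹)).mp
      simp only [huinv, inv_inv, huv, Units.val_mk0, Units.val_inv_eq_inv_val] at this
      exact this hτ
    have hIoc := hspec _ hmem
    have hτpos : 0 < τ := by
      exact inv_pos.mp hIoc.1
    have hge : 1 ≤ τ := by
      have h1 := hIoc.2
      nlinarith [inv_mul_cancel₀ hτ0]
    linarith [hab, hs]
  -- B and its properties
  set B : Matrix (Fin N) (Fin N) ℝ := (β + 1) • (1 : Matrix (Fin N) (Fin N) ℝ) - β • Ahat with hBdef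
  have hBpd : B.PosDef := by
    have hEq : B = β • ((1 : Matrix (Fin N) (Fin N) ℝ) - Ahat) + 1 := by
      rw [hBdef]; module
    rw [hEq]
    exact Matrix.PosDef.posSemidef_add (aux_smul_psd h1A hβ.le) Matrix.PosDef.one
  have hBdet : IsUnit B.det := hBpd.det_pos.ne'.isUnit
  -- the matrix 1 - (β/(β+1)) Ahat equals (1/(β+1)) • B
  have hGeq : (1 : Matrix (Fin N) (Fin N) ℝ) - (β / (β + 1)) • Ahat = (1 / (β + 1)) • B := by
    rw [hBdef, smul_sub, smul_smul, smul_smul]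
    rw [show (1 / (β + 1)) * (β + 1) = 1 by field_simp,
      show (1 / (β + 1)) * β = β / (β + 1) by ring, one_smul]
  have hGpd : ((1 : Matrix (Fin N) (Fin N) ℝ) - (β / (β + 1)) • Ahat).PosDef := by
    rw [hGeq]; exact aux_smul_pd hBpd (by positivity)
  -- P = Ahat⁻¹ * B and P is PD
  have hPeqAB : P = Ahat⁻¹ * B := by
    show Ahat⁻¹ * (1 + β • ((1 : Matrix (Fin N) (Fin N) ℝ) - Ahat)) = Ahat⁻¹ * B
    congr 1
    rw [hBdef]; module
  have hPeq : P = (β + 1) • (Ahat⁻¹ - 1) + 1 := by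
    rw [hPeqAB, hBdef, Matrix.mul_sub, Matrix.mul_smul, Matrix.mul_smul, mul_one,
      Matrix.nonsing_inv_mul Ahat hAdet]
    module
  have hPpd : P.PosDef := by
    rw [hPeq]
    exact Matrix.PosDef.posSemidef_add (aux_smul_psd hinv1 hβ1.le) Matrix.PosDef.one
  -- the inverse of 1 - (β/(β+1)) Ahat
  have hGinv : ((1 : Matrix (Fin N) (Fin N) ℝ) - (β / (β + 1)) • Ahat)⁻¹ = (β + 1) • B⁻¹ := by
    apply Matrix.inv_eq_right_inv
    rw [hGeq, Matrix.smul_mul, Matrix.mul_smul, smul_smul,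
      show (1 / (β + 1)) * (β + 1) = 1 by field_simp, one_smul,
      Matrix.mul_nonsing_inv B hBdet]
  -- Hstar = B⁻¹ * Ahat * M
  have hHeq : Hstar = B⁻¹ * (Ahat * M) := by
    show (1 / (β + 1)) • (((1 : Matrix (Fin N) (Fin N) ℝ) - (β / (β + 1)) • Ahat)⁻¹ * Ahat * M)
      = B⁻¹ * (Ahat * M)
    rw [hGinv, Matrix.smul_mul, Matrix.smul_mul, smul_smul,
      show (1 / (β + 1)) * (β + 1) = 1 by field_simp, one_smul, Matrix.mul_assoc]
  -- the stationarity condition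
  have hPM : P * Hstar = M := by
    rw [hPeqAB, hHeq, Matrix.mul_assoc, ← Matrix.mul_assoc B B⁻¹,
      Matrix.mul_nonsing_inv B hBdet, Matrix.one_mul, ← Matrix.mul_assoc,
      Matrix.nonsing_inv_mul Ahat hAdet, Matrix.one_mul]
  -- symmetry of P as a transpose fact
  have hPt : Pᵀ = P := hPpd.1
  -- trace symmetry
  have key : ∀ X Y : Matrix (Fin N) (Fin d) ℝ, (Xᵀ * P * Y).trace = (Yᵀ * P * X).trace := by
    intro X Y
    conv_lhs => rw [← Matrix.trace_transpose]
    rw [Matrix.transpose_mul, Matrix.transpose_mul, Matrix.transpose_transpose, hPt,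
      ← Matrix.mul_assoc]
  refine ⟨hPpd, hGpd.isUnit, fun H => ?_⟩
  -- main expansion
  have hJ : ∀ X : Matrix (Fin N) (Fin d) ℝ,
      J X = -(Xᵀ * P * Hstar).trace + (1 / 2) * (Xᵀ * P * X).trace := by
    intro X
    show -(Xᵀ * M).trace + (1 / 2) * (Xᵀ * P * X).trace = _
    rw [← hPM, ← Matrix.mul_assoc]
  have hdiff : J H - J Hstar = (1 / 2) * ((H - Hstar)ᵀ * P * (H - Hstar)).trace := by
    rw [hJ H, hJ Hstar]
    have expand : ((H - Hstar)ᵀ * P * (H - Hstar)).trace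
        = (Hᵀ * P * H).trace - 2 * (Hᵀ * P * Hstar).trace + (Hstarᵀ * P * Hstar).trace := by
      rw [Matrix.transpose_sub, Matrix.sub_mul, Matrix.sub_mul, Matrix.mul_sub, Matrix.mul_sub,
        Matrix.trace_sub, Matrix.trace_sub, Matrix.trace_sub, key Hstar H]
      ring
    rw [expand]
    ring
  have hTnn : 0 ≤ ((H - Hstar)ᵀ * P * (H - Hstar)).trace :=
    aux_trace_nonneg hPpd.posSemidef (H - Hstar)
  constructor
  · have h2 : 0 ≤ J H - J Hstar := by rw [hdiff]; linarith
    linarith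
  · constructor
    · intro h
      have h2 : J H - J Hstar = 0 := by rw [← h]; ring
      rw [hdiff] at h2
      have hT0 : ((H - Hstar)ᵀ * P * (H - Hstar)).trace = 0 := by linarith
      have := (aux_trace_zero hPpd (H - Hstar)).mp hT0
      exact sub_eq_zero.mp this
    · intro h
      rw [h]
end
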